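/- For each subset h ⊆ K, the dimension of the interaction subspace U_h equals ∏_{k ∈ h} (I_k − 1), with the convention that the empty product equals 1. -/

import Mathlib

open scoped RealInnerProductSpace

variable {K : Type*} [Fintype K] [DecidableEq K]

/-- The subspace `W h` of `ℝ^I` (with `I = ∏ k, Fin (I k)`, standard inner product)
consisting of functions depending only on the coordinates indexed by `h`. -/
def cellW (I : K → ℕ) (h : Finset K) :
    Submodule ℝ (EuclideanSpace ℝ (∀ k, Fin (I k))) where
  carrier := {f | ∀ i j : ∀ k, Fin (I k), (∀ k ∈ h, i k = j k) → f i = f j}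
  add_mem' := by
    intro f g hf hg i j hij
    simp only [PiLp.add_apply, hf i j hij, hg i j hij]
  zero_mem' := by intro i j _; rfl
  smul_mem' := by
    intro c f hf i j hij
    simp only [PiLp.smul_apply, hf i j hij]

/-- The interaction subspace `U h = W h ∩ (∑_{h' ⊊ h} W h')ᗮ`. -/
noncomputable def cellU (I : K → ℕ) (h : Finset K) :
    Submodule ℝ (EuclideanSpace ℝ (∀ k, Fin (I k))) :=
  cellW I h ⊓ (⨆ h' ∈ h.ssubsets, cellW I h')ᗮ


set_option linter.unusedSectionVars false
set_option linter.unusedVariables false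

namespace CellAux

variable (I : K → ℕ)

lemma cellW_mono {h1 h2 : Finset K} (hsub : h1 ⊆ h2) : cellW I h1 ≤ cellW I h2 := by
  intro f hf i j hij
  exact hf i j fun k hk => hij k (hsub hk)

/-- Explicit linear equivalence between `W h` and functions on the `h`-coordinates. -/
noncomputable def wEquiv (hI : ∀ k, 1 ≤ I k) (h : Finset K) :
    cellW I h ≃ₗ[ℝ] ((∀ k : h, Fin (I k)) → ℝ) where
  toFun f x := (f : EuclideanSpace ℝ (∀ k, Fin (I k)))
      (fun k => if hk : k ∈ h then x ⟨k, hk⟩ else ⟨0, hI k⟩)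
  map_add' f g := rfl
  map_smul' c f := rfl
  invFun g := ⟨WithLp.toLp 2 (fun y => g (fun (k : h) => y k.1)), fun i j hij => by
    exact congrArg g (funext fun k => hij k.1 k.2)⟩
  left_inv f := by
    apply Subtype.ext; ext y
    exact f.2 _ y (fun k hk => by simp [dif_pos hk])
  right_inv g := by
    funext x
    exact congrArg g (funext fun k => by simp)

lemma finrank_cellW (hI : ∀ k, 1 ≤ I k) (h : Finset K) :
    Module.finrank ℝ (cellW I h) = ∏ k ∈ h, I k := by
  rw [(wEquiv I hI h).finrank_eq, Module.finrank_pi, Fintype.card_pi]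
  simp only [Fintype.card_fin]
  exact Finset.prod_coe_sort h I


/-- The averaging operator over coordinates outside `h`. -/
noncomputable def avg (h : Finset K) (f : EuclideanSpace ℝ (∀ k, Fin (I k))) :
    EuclideanSpace ℝ (∀ k, Fin (I k)) := WithLp.toLp 2 (fun x =>
  (∏ k ∈ hᶜ, (I k : ℝ))⁻¹ *
    ∑ y : ∀ k, Fin (I k), if ∀ k ∈ h, y k = x k then f y else 0)

lemma filter_agree_eq (h : Finset K) (x : ∀ k, Fin (I k)) :
    (Finset.univ.filter (fun y : ∀ k, Fin (I k) => ∀ k ∈ h, y k = x k))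
      = Fintype.piFinset (fun k => if k ∈ h then {x k} else Finset.univ) := by
  ext y
  simp only [Finset.mem_filter, Fintype.mem_piFinset, Finset.mem_univ, true_and]
  constructor
  · intro hy k
    by_cases hk : k ∈ h <;> simp [hk, hy]
  · intro hy k hk
    have := hy k
    simpa [hk] using this

lemma card_agree (h : Finset K) (x : ∀ k, Fin (I k)) :
    (Finset.univ.filter (fun y : ∀ k, Fin (I k) => ∀ k ∈ h, y k = x k)).card
      = ∏ k ∈ hᶜ, I k := by
  rw [filter_agree_eq, Fintype.card_piFinset]
  rw [← Finset.prod_mul_prod_compl h]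
  have h1 : ∏ k ∈ h, (if k ∈ h then ({x k} : Finset (Fin (I k))) else Finset.univ).card = 1 := by
    apply Finset.prod_eq_one
    intro k hk
    simp [hk]
  rw [h1, one_mul]
  apply Finset.prod_congr rfl
  intro k hk
  rw [Finset.mem_compl] at hk
  simp [hk]

lemma avg_mem_cellW (h : Finset K) (f : EuclideanSpace ℝ (∀ k, Fin (I k))) :
    avg I h f ∈ cellW I h := by
  intro i j hij
  unfold avg
  simp only [PiLp.toLp_apply]
  congr 1
  apply Finset.sum_congr rfl
  intro y _
  have : (∀ k ∈ h, y k = i k) ↔ (∀ k ∈ h, y k = j k) := by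
    constructor <;> intro hy k hk
    · rw [hy k hk, hij k hk]
    · rw [hy k hk, ← hij k hk]
  simp only [this]

lemma prod_pos (hI : ∀ k, 1 ≤ I k) (s : Finset K) : (0:ℝ) < ∏ k ∈ s, (I k : ℝ) := by
  apply Finset.prod_pos
  intro k _
  exact_mod_cast hI k

lemma avg_of_mem (hI : ∀ k, 1 ≤ I k) {h : Finset K}
    {f : EuclideanSpace ℝ (∀ k, Fin (I k))} (hf : f ∈ cellW I h) :
    avg I h f = f := by
  ext x
  unfold avg
  simp only [PiLp.toLp_apply]
  have : ∑ y : ∀ k, Fin (I k), (if ∀ k ∈ h, y k = x k then f y else 0)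
      = (∏ k ∈ hᶜ, (I k : ℝ)) * f x := by
    rw [← Finset.sum_filter]
    rw [Finset.sum_congr rfl (fun y hy => hf y x (Finset.mem_filter.1 hy).2)]
    rw [Finset.sum_const, card_agree]
    simp [mul_comm]
  rw [this, ← mul_assoc, inv_mul_cancel₀ (ne_of_gt (prod_pos I hI hᶜ)), one_mul]

lemma inner_avg (h : Finset K) (f g : EuclideanSpace ℝ (∀ k, Fin (I k))) :
    ⟪avg I h f, g⟫ = ⟪f, avg I h g⟫ := by
  simp only [PiLp.inner_apply, RCLike.inner_apply, conj_trivial]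
  unfold avg
  simp only [PiLp.toLp_apply]
  simp only [Finset.sum_mul, Finset.mul_sum, ite_mul, zero_mul, mul_ite, mul_zero]
  rw [Finset.sum_comm]
  apply Finset.sum_congr rfl
  intro y _
  apply Finset.sum_congr rfl
  intro x _
  have hiff : (∀ k ∈ h, x k = y k) ↔ (∀ k ∈ h, y k = x k) := by
    constructor <;> intro hy k hk <;> exact (hy k hk).symm
  by_cases hc : ∀ k ∈ h, y k = x k
  · rw [if_pos hc, if_pos (hiff.2 hc)]
    ring
  · rw [if_neg hc, if_neg (fun hh => hc (hiff.1 hh))]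

lemma avg_mem_inter {h1 h2 : Finset K} {f : EuclideanSpace ℝ (∀ k, Fin (I k))}
    (hf : f ∈ cellW I h2) : avg I h1 f ∈ cellW I (h1 ∩ h2) := by
  intro i j hij
  unfold avg
  simp only [PiLp.toLp_apply]
  congr 1
  rw [← Finset.sum_filter, ← Finset.sum_filter]
  apply Finset.sum_bij' (fun y _ => fun k => if k ∈ h1 then j k else y k)
      (fun y _ => fun k => if k ∈ h1 then i k else y k)
  · intro y hy
    simp only [Finset.mem_filter, Finset.mem_univ, true_and] at hy ⊢
    intro k hk
    simp [hk]
  · intro y hy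
    simp only [Finset.mem_filter, Finset.mem_univ, true_and] at hy ⊢
    intro k hk
    simp [hk]
  · intro y hy
    simp only [Finset.mem_filter, Finset.mem_univ, true_and] at hy
    funext k
    by_cases hk : k ∈ h1 <;> simp [hk, hy k]
  · intro y hy
    simp only [Finset.mem_filter, Finset.mem_univ, true_and] at hy
    funext k
    by_cases hk : k ∈ h1 <;> simp [hk, hy k]
  · intro y hy
    simp only [Finset.mem_filter, Finset.mem_univ, true_and] at hy
    apply hf
    intro k hk
    by_cases hk1 : k ∈ h1
    · have hk12 : k ∈ h1 ∩ h2 := Finset.mem_inter.2 ⟨hk1, hk⟩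
      simp [hk1, ← hij k hk12, hy k hk1]
    · simp [hk1]


lemma inner_cellW_cellU (hI : ∀ k, 1 ≤ I k) {h1 h2 : Finset K} (hns : ¬ h2 ⊆ h1)
    {f g : EuclideanSpace ℝ (∀ k, Fin (I k))}
    (hf : f ∈ cellW I h1) (hg : g ∈ cellU I h2) : ⟪f, g⟫ = 0 := by
  obtain ⟨hgW, hgO⟩ := hg
  set p := avg I h1 g with hp
  have hp1 : p ∈ cellW I h1 := avg_mem_cellW I h1 g
  have hp2 : p ∈ cellW I (h1 ∩ h2) := avg_mem_inter I hgW
  have hlt : h1 ∩ h2 ⊂ h2 := by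
    refine Finset.ssubset_iff_subset_ne.2 ⟨Finset.inter_subset_right, fun hh => ?_⟩
    exact hns (Finset.inter_eq_right.1 hh)
  have hmem : p ∈ ⨆ h' ∈ h2.ssubsets, cellW I h' := by
    have := le_iSup₂ (f := fun (h' : Finset K) (_ : h' ∈ h2.ssubsets) => cellW I h')
      (h1 ∩ h2) (Finset.mem_ssubsets.2 hlt)
    exact this hp2
  have hz : ⟪p, g⟫ = 0 := (Submodule.mem_orthogonal _ g).1 hgO p hmem
  have hpz : p = 0 := by
    rw [← inner_self_eq_zero (𝕜 := ℝ)]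
    calc ⟪p, p⟫ = ⟪g, avg I h1 p⟫ := by rw [hp, inner_avg]
    _ = ⟪g, p⟫ := by rw [avg_of_mem I hI hp1]
    _ = 0 := by rw [real_inner_comm, hz]
  have : ⟪f, g⟫ = ⟪f, p⟫ := by
    conv_lhs => rw [← avg_of_mem I hI hf, inner_avg]
  rw [this, hpz, inner_zero_right]

lemma cellU_le_orth (hI : ∀ k, 1 ≤ I k) {h1 h2 : Finset K} (hne : h1 ≠ h2) :
    cellU I h1 ≤ (cellU I h2)ᗮ := by
  intro f hf
  rw [Submodule.mem_orthogonal]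
  intro u hu
  by_cases hc : h1 ⊆ h2
  · have hns : ¬ h2 ⊆ h1 := fun hh => hne (Finset.Subset.antisymm hc hh)
    rw [real_inner_comm]
    exact inner_cellW_cellU I hI hns hf.1 hu
  · exact inner_cellW_cellU I hI hc hu.1 hf

lemma iSup_ssub_le (h : Finset K) : (⨆ h' ∈ h.ssubsets, cellW I h') ≤ cellW I h :=
  iSup₂_le fun h' hh' => cellW_mono I (Finset.mem_ssubsets.1 hh').subset

lemma cellU_sup (h : Finset K) :
    cellU I h ⊔ (⨆ h' ∈ h.ssubsets, cellW I h') = cellW I h := by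
  have := Submodule.sup_orthogonal_inf_of_hasOrthogonalProjection (iSup_ssub_le I h)
  rw [cellU, inf_comm, sup_comm]
  exact this

lemma cellU_inf (h : Finset K) :
    cellU I h ⊓ (⨆ h' ∈ h.ssubsets, cellW I h') = ⊥ := by
  apply le_antisymm _ bot_le
  refine le_trans (inf_le_inf_right _ inf_le_right) ?_
  rw [inf_comm]
  exact (Submodule.orthogonal_disjoint _).le_bot

lemma cellW_eq_iSup_cellU (h : Finset K) :
    cellW I h = ⨆ h' ∈ h.powerset, cellU I h' := by
  induction h using Finset.strongInduction with
  | _ h ih =>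
    have hT : (⨆ h' ∈ h.ssubsets, cellW I h') = ⨆ h' ∈ h.ssubsets, cellU I h' := by
      apply le_antisymm
      · refine iSup₂_le fun h' hh' => ?_
        rw [ih h' (Finset.mem_ssubsets.1 hh')]
        refine iSup₂_le fun h'' hh'' => ?_
        refine le_iSup₂ (f := fun (t : Finset K) (_ : t ∈ h.ssubsets) => cellU I t) h'' ?_
        exact Finset.mem_ssubsets.2 (lt_of_le_of_lt (Finset.mem_powerset.1 hh'')
          (Finset.mem_ssubsets.1 hh'))
      · refine iSup₂_le fun h' hh' => le_trans inf_le_left ?_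
        exact le_iSup₂ (f := fun (t : Finset K) (_ : t ∈ h.ssubsets) => cellW I t) h' hh'
    rw [← cellU_sup I h, hT]
    have hins : h.powerset = insert h h.ssubsets := by
      rw [Finset.ssubsets, Finset.insert_erase (Finset.mem_powerset_self h)]
    rw [hins, Finset.iSup_insert]


lemma finrank_biSup (s : Finset (Finset K))
    (p : Finset K → Submodule ℝ (EuclideanSpace ℝ (∀ k, Fin (I k))))
    (horth : ∀ a ∈ s, ∀ b ∈ s, a ≠ b → p a ≤ (p b)ᗮ) :
    Module.finrank ℝ (⨆ a ∈ s, p a : Submodule ℝ (EuclideanSpace ℝ (∀ k, Fin (I k))))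
      = ∑ a ∈ s, Module.finrank ℝ (p a) := by
  induction s using Finset.induction with
  | empty => simp
  | @insert a s ha ih =>
    rw [Finset.iSup_insert, Finset.sum_insert ha]
    have hle : (⨆ b ∈ s, p b) ≤ (p a)ᗮ := by
      refine iSup₂_le fun b hb => ?_
      exact horth b (Finset.mem_insert_of_mem hb) a (Finset.mem_insert_self a s)
        (fun hh => ha (hh ▸ hb))
    have hdisj : p a ⊓ (⨆ b ∈ s, p b) = ⊥ := by
      apply le_antisymm _ bot_le
      refine le_trans (inf_le_inf_left _ hle) ?_
      exact (Submodule.orthogonal_disjoint _).le_bot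
    have hrk := Submodule.finrank_sup_add_finrank_inf_eq (p a) (⨆ b ∈ s, p b)
    rw [hdisj] at hrk
    simp only [finrank_bot, add_zero] at hrk
    rw [hrk, ih (fun x hx y hy hxy => horth x (Finset.mem_insert_of_mem hx) y
      (Finset.mem_insert_of_mem hy) hxy)]

lemma prod_eq_sum_powerset (hI : ∀ k, 1 ≤ I k) (h : Finset K) :
    ∏ k ∈ h, I k = ∑ h' ∈ h.powerset, ∏ k ∈ h', (I k - 1) := by
  have : ∏ k ∈ h, I k = ∏ k ∈ h, ((I k - 1) + 1) := by
    apply Finset.prod_congr rfl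
    intro k _
    have := hI k
    omega
  rw [this, Finset.prod_add]
  apply Finset.sum_congr rfl
  intro t _
  simp

theorem finrank_cellU_aux (hI : ∀ k, 1 ≤ I k) (h : Finset K) :
    Module.finrank ℝ (cellU I h) = ∏ k ∈ h, (I k - 1) := by
  induction h using Finset.strongInduction with
  | _ h ih =>
    have hT : (⨆ h' ∈ h.ssubsets, cellW I h') = ⨆ h' ∈ h.ssubsets, cellU I h' := by
      apply le_antisymm
      · refine iSup₂_le fun h' hh' => ?_
        rw [cellW_eq_iSup_cellU I h']
        refine iSup₂_le fun h'' hh'' => ?_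
        refine le_iSup₂ (f := fun (t : Finset K) (_ : t ∈ h.ssubsets) => cellU I t) h'' ?_
        exact Finset.mem_ssubsets.2 (lt_of_le_of_lt (Finset.mem_powerset.1 hh'')
          (Finset.mem_ssubsets.1 hh'))
      · refine iSup₂_le fun h' hh' => le_trans inf_le_left ?_
        exact le_iSup₂ (f := fun (t : Finset K) (_ : t ∈ h.ssubsets) => cellW I t) h' hh'
    have hTrk : Module.finrank ℝ (⨆ h' ∈ h.ssubsets, cellW I h' :
        Submodule ℝ (EuclideanSpace ℝ (∀ k, Fin (I k))))
        = ∑ h' ∈ h.ssubsets, ∏ k ∈ h', (I k - 1) := by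
      rw [hT, finrank_biSup I h.ssubsets (cellU I)
        (fun a _ b _ hab => cellU_le_orth I hI hab)]
      exact Finset.sum_congr rfl fun h' hh' => ih h' (Finset.mem_ssubsets.1 hh')
    have hrk := Submodule.finrank_sup_add_finrank_inf_eq (cellU I h)
      (⨆ h' ∈ h.ssubsets, cellW I h')
    rw [cellU_sup I h, cellU_inf I h] at hrk
    simp only [finrank_bot, add_zero] at hrk
    rw [finrank_cellW I hI h, hTrk] at hrk
    have hps := prod_eq_sum_powerset I hI h
    have hsplit : ∑ h' ∈ h.powerset, ∏ k ∈ h', (I k - 1)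
        = (∑ h' ∈ h.ssubsets, ∏ k ∈ h', (I k - 1)) + ∏ k ∈ h, (I k - 1) := by
      rw [Finset.ssubsets]
      exact (Finset.sum_erase_add _ _ (Finset.mem_powerset_self h)).symm
    omega

end CellAux

/-- The dimension of the interaction subspace `U h` equals `∏_{k ∈ h} (I k − 1)`. -/
theorem finrank_cellU (I : K → ℕ) (hI : ∀ k, 1 ≤ I k) (h : Finset K) :
    Module.finrank ℝ (cellU I h) = ∏ k ∈ h, (I k - 1) :=
  CellAux.finrank_cellU_aux I hI h
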